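/- Let G be a group, g ≥ 2 an integer, and {T_k}_{k ∈ ℤ/(8g−4)ℤ} elements of G satisfying T_{σ(k)} T_k = 1 and T_{ρ³(k)} T_{ρ²(k)} T_{ρ(k)} T_k = 1 for all k, where ρ(k) = σ(k)+1. Then for all k: T_k⁻¹ T_{σ(k)+1}⁻¹ = T_{k−1}⁻¹ T_{σ(k)+4g−2}⁻¹ (indices mod 8g−4). -/

import Mathlib

def sigmaZ (g : ℕ) (k : ZMod (8 * g - 4)) : ZMod (8 * g - 4) :=
  if Odd k.val then 4 * (g : ZMod (8 * g - 4)) - k else 2 - k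

def rhoZ (g : ℕ) (k : ZMod (8 * g - 4)) : ZMod (8 * g - 4) := sigmaZ g k + 1

lemma nat_odd_cast (m : ℕ) : Odd m ↔ (m : ZMod 2) = 1 := by
  rw [Nat.odd_iff, ← ZMod.natCast_mod m 2]
  rcases Nat.mod_two_eq_zero_or_one m with h | h <;> simp [h]

lemma odd_val_iff {n : ℕ} [NeZero n] (h : (2:ℕ) ∣ n) (x : ZMod n) :
    Odd x.val ↔ ZMod.castHom h (ZMod 2) x = 1 := by
  rw [nat_odd_cast, ZMod.castHom_apply, ZMod.natCast_val]

theorem generator_relation {G : Type*} [Group G] (g : ℕ) (hg : 2 ≤ g)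
    (T : ZMod (8 * g - 4) → G)
    (hinv : ∀ k, T (sigmaZ g k) * T k = 1)
    (hcycle : ∀ k, T (rhoZ g (rhoZ g (rhoZ g k))) * T (rhoZ g (rhoZ g k)) * T (rhoZ g k) * T k = 1) :
    ∀ k, (T k)⁻¹ * (T (sigmaZ g k + 1))⁻¹
      = (T (k - 1))⁻¹ * (T (sigmaZ g k + 4 * (g : ZMod (8 * g - 4)) - 2))⁻¹ := by
  haveI : NeZero (8 * g - 4) := ⟨by omega⟩
  have h2 : (2:ℕ) ∣ 8 * g - 4 := by omega
  set φ : ZMod (8 * g - 4) →+* ZMod 2 := ZMod.castHom h2 (ZMod 2) with hφ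
  have oddOf : ∀ x : ZMod (8 * g - 4), φ x = 1 → Odd x.val :=
    fun x h => (odd_val_iff h2 x).mpr h
  have evenOf : ∀ x : ZMod (8 * g - 4), φ x = 0 → ¬ Odd x.val := by
    intro x h hx
    rw [odd_val_iff h2 x, h] at hx
    exact absurd hx (by decide)
  have h40 : (4 : ZMod 2) = 0 := by decide
  have h8 : 8 * (g : ZMod (8 * g - 4)) = 4 := by
    have h0 : ((8 * g - 4 : ℕ) : ZMod (8 * g - 4)) = 0 := ZMod.natCast_self _
    rw [Nat.cast_sub (by omega : 4 ≤ 8 * g)] at h0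
    push_cast at h0
    linear_combination h0
  have hTinv : ∀ x, T (sigmaZ g x) = (T x)⁻¹ := fun x => eq_inv_of_mul_eq_one_left (hinv x)
  intro k
  rcases (by decide : ∀ y : ZMod 2, y = 0 ∨ y = 1) (φ k) with hk | hk
  · -- even case
    have s1 : sigmaZ g k = 2 - k := by rw [sigmaZ, if_neg (evenOf _ hk)]
    have s2 : sigmaZ g (3 - k) = 4 * (g : ZMod (8*g-4)) + k - 3 := by
      rw [sigmaZ, if_pos (oddOf _ (by simp [map_sub, map_ofNat, hk]; decide))]
      ring
    have s3 : sigmaZ g (k + 4 * (g : ZMod (8*g-4)) - 2) = 4 * (g : ZMod (8*g-4)) - k := by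
      rw [sigmaZ, if_neg (evenOf _ (by simp [map_sub, map_add, map_mul, map_ofNat, map_natCast, hk, h40]; decide))]
      linear_combination -h8
    have s4 : sigmaZ g (4 * (g : ZMod (8*g-4)) - k + 1) = k - 1 := by
      rw [sigmaZ, if_pos (oddOf _ (by simp [map_sub, map_add, map_mul, map_one, map_ofNat, map_natCast, hk, h40]))]
      ring
    have r1 : rhoZ g k = 3 - k := by rw [rhoZ, s1]; ring
    have r2 : rhoZ g (rhoZ g k) = k + 4 * (g : ZMod (8*g-4)) - 2 := by
      rw [r1, rhoZ, s2]; ring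
    have r3 : rhoZ g (rhoZ g (rhoZ g k)) = 4 * (g : ZMod (8*g-4)) - k + 1 := by
      rw [r2, rhoZ, s3]
    have hc := hcycle k
    rw [r3, r2, r1] at hc
    have i1 : T (4 * (g : ZMod (8*g-4)) - k) = (T (k + 4 * (g : ZMod (8*g-4)) - 2))⁻¹ := by
      rw [← s3]; exact hTinv _
    have i2 : T (k - 1) = (T (4 * (g : ZMod (8*g-4)) - k + 1))⁻¹ := by
      rw [← s4]; exact hTinv _
    rw [s1, show (2 : ZMod (8*g-4)) - k + 1 = 3 - k by ring,
        show (2 : ZMod (8*g-4)) - k + 4 * (g : ZMod (8*g-4)) - 2 = 4 * (g : ZMod (8*g-4)) - k by ring,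
        i1, i2, inv_inv, inv_inv]
    have key : T (4 * (g : ZMod (8*g-4)) - k + 1) * T (k + 4 * (g : ZMod (8*g-4)) - 2)
        = (T (3 - k) * T k)⁻¹ := by
      apply eq_inv_of_mul_eq_one_left
      rw [← mul_assoc]; exact hc
    rw [key, mul_inv_rev]
  · -- odd case
    have s1 : sigmaZ g k = 4 * (g : ZMod (8*g-4)) - k := by rw [sigmaZ, if_pos (oddOf _ hk)]
    have s2 : sigmaZ g (4 * (g : ZMod (8*g-4)) - k + 1) = k + 1 - 4 * (g : ZMod (8*g-4)) := by
      rw [sigmaZ, if_neg (evenOf _ (by simp [map_sub, map_add, map_mul, map_one, map_ofNat, map_natCast, hk, h40]; decide))]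
      ring
    have s3 : sigmaZ g (k + 2 - 4 * (g : ZMod (8*g-4))) = 2 - k := by
      rw [sigmaZ, if_pos (oddOf _ (by simp [map_sub, map_add, map_mul, map_ofNat, map_natCast, hk, h40]; decide))]
      linear_combination h8
    have s4 : sigmaZ g (3 - k) = k - 1 := by
      rw [sigmaZ, if_neg (evenOf _ (by simp [map_sub, map_ofNat, hk]; decide))]
      ring
    have r1 : rhoZ g k = 4 * (g : ZMod (8*g-4)) - k + 1 := by rw [rhoZ, s1]
    have r2 : rhoZ g (rhoZ g k) = k + 2 - 4 * (g : ZMod (8*g-4)) := by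
      rw [r1, rhoZ, s2]; ring
    have r3 : rhoZ g (rhoZ g (rhoZ g k)) = 3 - k := by
      rw [r2, rhoZ, s3]; ring
    have hc := hcycle k
    rw [r3, r2, r1] at hc
    have i1 : T (2 - k) = (T (k + 2 - 4 * (g : ZMod (8*g-4))))⁻¹ := by
      rw [← s3]; exact hTinv _
    have i2 : T (k - 1) = (T (3 - k))⁻¹ := by
      rw [← s4]; exact hTinv _
    rw [s1, show (4 * (g : ZMod (8*g-4)) - k) + 4 * (g : ZMod (8*g-4)) - 2 = 2 - k by linear_combination h8,
        i1, i2, inv_inv, inv_inv]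
    have key : T (3 - k) * T (k + 2 - 4 * (g : ZMod (8*g-4)))
        = (T (4 * (g : ZMod (8*g-4)) - k + 1) * T k)⁻¹ := by
      apply eq_inv_of_mul_eq_one_left
      rw [← mul_assoc]; exact hc
    rw [key, mul_inv_rev]
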